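/- If f(X) ∈ k[X] satisfies f(X + a) = f(X), then there exists a polynomial q(Z) ∈ k[Z] such that f(X) = q(X^p − a^{p−1}·X), i.e. f is the composite of q with X^p − a^{p−1}·X. -/

import Mathlib

open Polynomial

/-- Let `k` be algebraically closed of characteristic `p ≥ 3` and `a ≠ 0`.
If `f(X + a) = f(X)`, then `f(X) = q(X^p − a^{p−1}·X)` for some `q ∈ k[X]`. -/
theorem statement8 {k : Type} [Field k] [IsAlgClosed k] (p : ℕ) [CharP k p] (hp : 3 ≤ p)
    (a : k) (ha : a ≠ 0) (f : k[X]) (hfa : f.comp (X + C a) = f) :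
    ∃ q : k[X], f = q.comp (X ^ p - C (a ^ (p - 1)) * X) := by
  have hpprime : p.Prime := by
    rcases CharP.char_is_prime_or_zero k p with h | h
    · exact h
    · omega
  haveI : Fact p.Prime := ⟨hpprime⟩
  set π : k[X] := X ^ p - C (a ^ (p - 1)) * X with hπ
  have hdegCX : degree (C (a ^ (p - 1)) * X) < (p : ℕ) := by
    refine lt_of_le_of_lt (degree_C_mul_X_le _) ?_
    exact_mod_cast Nat.lt_of_lt_of_le (by norm_num) hp
  have hmonic : π.Monic := monic_X_pow_sub (by simpa using hdegCX)
  have hdegπ : π.degree = (p : ℕ) := by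
    rw [hπ, degree_sub_eq_left_of_degree_lt (by simpa using hdegCX), degree_X_pow]
  have hnatπ : π.natDegree = p := natDegree_eq_of_degree_eq_some hdegπ
  have hπ0 : π ≠ 0 := hmonic.ne_zero
  -- π is invariant under X ↦ X + a
  have hπcomp : π.comp (X + C a) = π := by
    have h1 : (X + C a : k[X]) ^ p = X ^ p + C (a ^ p) := by
      rw [add_pow_char, ← C_pow]
    have h2 : a ^ (p - 1) * a = a ^ p := by
      rw [← pow_succ]
      congr 1
      omega
    rw [hπ, sub_comp, pow_comp, X_comp, mul_comp, C_comp, X_comp, h1, mul_add, ← C_mul, h2]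
    ring
  suffices H : ∀ n (f : k[X]), f.natDegree ≤ n → f.comp (X + C a) = f →
      ∃ q : k[X], f = q.comp π by
    exact H f.natDegree f le_rfl hfa
  intro n
  induction n with
  | zero =>
    intro f hdeg _
    exact ⟨C (f.coeff 0), by rw [C_comp, ← eq_C_of_natDegree_le_zero hdeg]⟩
  | succ n ih =>
    intro f hdeg hfa
    set g := f /ₘ π with hg
    set r := f %ₘ π with hr
    have hdiv : r + π * g = f := modByMonic_add_div f π
    have hrdeg : r.degree < π.degree := degree_modByMonic_lt f hmonic
    have hrnat : r.natDegree < p := by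
      rcases eq_or_ne r 0 with h | h
      · simp [h, hpprime.pos]
      · rw [degree_eq_natDegree h, hdegπ, Nat.cast_lt] at hrdeg
        exact hrdeg
    -- uniqueness of division: shifts of g and r are g and r
    have hcompdeg : (r.comp (X + C a)).degree < π.degree := by
      rcases eq_or_ne (r.comp (X + C a)) 0 with h | h
      · rw [h, hdegπ]; exact WithBot.bot_lt_coe _
      · have hnat : (r.comp (X + C a)).natDegree = r.natDegree := by
          rw [← taylor_apply, natDegree_taylor]
        rw [degree_eq_natDegree h, hnat, hdegπ, Nat.cast_lt]
        exact hrnat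
    have heq : r.comp (X + C a) + π * g.comp (X + C a) = f := by
      conv_rhs => rw [← hfa, ← hdiv]
      rw [add_comp, mul_comp, hπcomp]
    obtain ⟨hgc, hrc⟩ := div_modByMonic_unique (g.comp (X + C a)) (r.comp (X + C a)) hmonic
      ⟨heq, hcompdeg⟩
    rw [← hg] at hgc
    rw [← hr] at hrc
    replace hgc := hgc.symm
    replace hrc := hrc.symm
    -- r is constant
    have hrconst : r = C (r.eval 0) := by
      have heval : ∀ x : k, r.eval (x + a) = r.eval x := by
        intro x
        conv_rhs => rw [← hrc]
        rw [eval_comp, eval_add, eval_X, eval_C]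
      have hevaln : ∀ m : ℕ, r.eval ((m : k) * a) = r.eval 0 := by
        intro m
        induction m with
        | zero => simp
        | succ m ihm =>
          have : ((m + 1 : ℕ) : k) * a = (m : k) * a + a := by push_cast; ring
          rw [this, heval, ihm]
      have hzero : r - C (r.eval 0) = 0 := by
        apply eq_zero_of_natDegree_lt_card_of_eval_eq_zero (r - C (r.eval 0))
          (f := fun i : Fin p => (i : k) * a)
        · intro i j hij
          have : ((i : ℕ) : k) = ((j : ℕ) : k) :=
            mul_right_cancel₀ ha hij
          exact Fin.ext (CharP.natCast_injOn_Iio k p i.isLt j.isLt this)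
        · intro i
          simp [hevaln]
        · simpa [natDegree_sub_C, Fintype.card_fin] using hrnat
      exact sub_eq_zero.mp hzero
    rcases eq_or_ne g 0 with hg0 | hg0
    · refine ⟨C (r.eval 0), ?_⟩
      rw [C_comp, ← hrconst, ← hdiv, hg0, mul_zero, add_zero]
    · -- natDegree f = p + natDegree g, so natDegree g ≤ n
      have hdegf : f.degree = ((p + g.natDegree : ℕ) : WithBot ℕ) := by
        rw [← hdiv, degree_add_eq_right_of_degree_lt, degree_mul, hdegπ,
          degree_eq_natDegree hg0, ← Nat.cast_add]
        rw [degree_mul, hdegπ, degree_eq_natDegree hg0, ← Nat.cast_add]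
        exact lt_of_lt_of_le (lt_of_lt_of_le hrdeg (le_of_eq hdegπ)) (by
          exact_mod_cast Nat.le_add_right p g.natDegree)
      have hnatf : f.natDegree = p + g.natDegree := natDegree_eq_of_degree_eq_some hdegf
      have hgle : g.natDegree ≤ n := by omega
      obtain ⟨q', hq'⟩ := ih g hgle hgc
      refine ⟨C (r.eval 0) + X * q', ?_⟩
      rw [add_comp, mul_comp, X_comp, C_comp, ← hq', ← hrconst, hdiv]
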